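/- (Lemma 2, recovery condition for the nuclear norm quartet test.) Suppose P1, P2, P3, P4 are column-stochastic. Let p, q ∈ ℝ^k and let Δ be a real k×k matrix. Let A_⊥, B_⊥, C_⊥ denote the unfoldings built from middle matrix p qᵀ, and A, B, C those built from middle matrix p qᵀ + Δ. Define the excessive dependence θ := min{ ‖B_⊥‖* − ‖A_⊥‖*, ‖C_⊥‖* − ‖A_⊥‖* }. If ‖Δ‖_F ≤ θ / (k² + k), then ‖A‖* ≤ ‖B‖* and ‖A‖* ≤ ‖C‖*, i.e., the nuclear norm quartet test returns the correct quartet relation. -/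

import Mathlib

/-- The nuclear norm of a real matrix: the sum of its singular values. -/
noncomputable def nuclearNorm {α β : Type*} [Fintype α] [Fintype β] [DecidableEq β]
    (M : Matrix α β ℝ) : ℝ :=
  ∑ i, Real.sqrt ((Matrix.isHermitian_conjTranspose_mul_self M).eigenvalues i)

/-- The Frobenius norm of a real matrix. -/
noncomputable def frobeniusNorm {α β : Type*} [Fintype α] [Fintype β] (M : Matrix α β ℝ) : ℝ :=
  Real.sqrt (∑ i, ∑ j, (M i j) ^ 2)

/-- A matrix is column-stochastic if its entries are nonnegative and each column sums to 1. -/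
def colStochastic {α β : Type*} [Fintype α] (M : Matrix α β ℝ) : Prop :=
  (∀ i j, 0 ≤ M i j) ∧ ∀ j, ∑ i, M i j = 1

/-- The unfolding `A` built from middle matrix `Mmid`. -/
def unfoldA {n k : ℕ} (P1 P2 P3 P4 : Matrix (Fin n) (Fin k) ℝ)
    (Mmid : Matrix (Fin k) (Fin k) ℝ) : Matrix (Fin n × Fin n) (Fin n × Fin n) ℝ :=
  Matrix.of fun r c => ∑ h, ∑ g, P1 r.1 h * P2 r.2 h * Mmid h g * P3 c.1 g * P4 c.2 g

/-- The unfolding `B` built from middle matrix `Mmid`. -/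
def unfoldB {n k : ℕ} (P1 P2 P3 P4 : Matrix (Fin n) (Fin k) ℝ)
    (Mmid : Matrix (Fin k) (Fin k) ℝ) : Matrix (Fin n × Fin n) (Fin n × Fin n) ℝ :=
  Matrix.of fun r c => ∑ h, ∑ g, P1 r.1 h * P2 c.1 h * Mmid h g * P3 r.2 g * P4 c.2 g

/-- The unfolding `C` built from middle matrix `Mmid`. -/
def unfoldC {n k : ℕ} (P1 P2 P3 P4 : Matrix (Fin n) (Fin k) ℝ)
    (Mmid : Matrix (Fin k) (Fin k) ℝ) : Matrix (Fin n × Fin n) (Fin n × Fin n) ℝ :=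
  Matrix.of fun r c => ∑ h, ∑ g, P1 r.1 h * P2 c.1 h * Mmid h g * P3 c.2 g * P4 r.2 g


open Matrix in
lemma exists_spectral {α β : Type*} [Fintype α] [Fintype β] [DecidableEq β]
    (M : Matrix α β ℝ) :
    ∃ (V : Matrix β β ℝ) (lam : β → ℝ),
      (∀ i j, ∑ x, V x i * V x j = if i = j then 1 else 0) ∧
      (∀ b c, ∑ j, V b j * V c j = if b = c then 1 else 0) ∧
      (∀ i j, (M *ᵥ (fun x => V x i)) ⬝ᵥ (M *ᵥ (fun x => V x j)) = if i = j then lam j else 0) ∧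
      nuclearNorm M = ∑ j, Real.sqrt (lam j) := by
  set hH := Matrix.isHermitian_conjTranspose_mul_self M with hHdef
  refine ⟨(hH.eigenvectorUnitary : Matrix β β ℝ), hH.eigenvalues, ?_, ?_, ?_, rfl⟩
  · intro i j
    have h1 : (star (hH.eigenvectorUnitary : Matrix β β ℝ)) * (hH.eigenvectorUnitary : Matrix β β ℝ) = 1 :=
      Unitary.coe_star_mul_self _
    have := congrFun (congrFun h1 i) j
    simpa [Matrix.mul_apply, Matrix.star_apply, Matrix.one_apply, mul_comm] using this
  · intro b c
    have h1 : (hH.eigenvectorUnitary : Matrix β β ℝ) * (star (hH.eigenvectorUnitary : Matrix β β ℝ)) = 1 :=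
      Unitary.coe_mul_star_self _
    have := congrFun (congrFun h1 b) c
    simpa [Matrix.mul_apply, Matrix.star_apply, Matrix.one_apply] using this
  · intro i j
    have hcol : ∀ j : β, (fun x => (hH.eigenvectorUnitary : Matrix β β ℝ) x j)
        = (WithLp.equiv 2 _) (hH.eigenvectorBasis j) := by
      intro j; funext x; exact hH.eigenvectorUnitary_apply x j
    have heig : (Mᴴ * M) *ᵥ (fun x => (hH.eigenvectorUnitary : Matrix β β ℝ) x j)
        = hH.eigenvalues j • (fun x => (hH.eigenvectorUnitary : Matrix β β ℝ) x j) := by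
      rw [hcol]; exact hH.mulVec_eigenvectorBasis j
    have hmm : ∀ x y : β → ℝ, (M *ᵥ x) ⬝ᵥ (M *ᵥ y) = x ⬝ᵥ ((Mᴴ * M) *ᵥ y) := by
      intro x y
      rw [Matrix.conjTranspose_eq_transpose_of_trivial, ← Matrix.mulVec_mulVec,
        dotProduct_mulVec x, Matrix.vecMul_transpose]
    rw [hmm, heig]
    have h1 : (star (hH.eigenvectorUnitary : Matrix β β ℝ)) * (hH.eigenvectorUnitary : Matrix β β ℝ) = 1 :=
      Unitary.coe_star_mul_self _
    have := congrFun (congrFun h1 i) j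
    simp only [Matrix.mul_apply, Matrix.star_apply, Matrix.one_apply, star_trivial] at this
    simp only [dotProduct, Pi.smul_apply, smul_eq_mul]
    have : ∑ x, (hH.eigenvectorUnitary : Matrix β β ℝ) x i *
        (hH.eigenvalues j * (hH.eigenvectorUnitary : Matrix β β ℝ) x j)
        = hH.eigenvalues j * ∑ x, (hH.eigenvectorUnitary : Matrix β β ℝ) x i *
          (hH.eigenvectorUnitary : Matrix β β ℝ) x j := by
      rw [Finset.mul_sum]; congr 1; funext x; ring
    rw [this]
    rw [show (∑ x, (hH.eigenvectorUnitary : Matrix β β ℝ) x i *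
          (hH.eigenvectorUnitary : Matrix β β ℝ) x j) = if i = j then 1 else 0 from by
      have := congrFun (congrFun h1 i) j
      simpa [Matrix.mul_apply, Matrix.star_apply, Matrix.one_apply] using this]
    split <;> simp

open Matrix in
lemma abs_dotProduct_le {α : Type*} [Fintype α] (x y : α → ℝ) :
    |x ⬝ᵥ y| ≤ Real.sqrt (x ⬝ᵥ x) * Real.sqrt (y ⬝ᵥ y) := by
  have h := Finset.sum_mul_sq_le_sq_mul_sq Finset.univ x y
  have habs : |x ⬝ᵥ y| = Real.sqrt ((x ⬝ᵥ y) ^ 2) := (Real.sqrt_sq_eq_abs _).symm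
  have hxx : x ⬝ᵥ x = ∑ i, x i ^ 2 := by simp [dotProduct, sq]
  have hyy : y ⬝ᵥ y = ∑ i, y i ^ 2 := by simp [dotProduct, sq]
  rw [habs, hxx, hyy, ← Real.sqrt_mul (by positivity)]
  exact Real.sqrt_le_sqrt (by simpa [dotProduct] using h)

lemma dot_self_nonneg {α : Type*} [Fintype α] (x : α → ℝ) :
    0 ≤ dotProduct x x :=
  Finset.sum_nonneg fun i _ => mul_self_nonneg _

lemma orth_pairing {β : Type*} [Fintype β] [DecidableEq β] (V : Matrix β β ℝ)
    (hVVt : ∀ b c, ∑ j, V b j * V c j = if b = c then 1 else 0) (n x : β → ℝ) :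
    ∑ j, (∑ b, n b * V b j) * (∑ c, x c * V c j) = ∑ b, n b * x b := by
  have h1 : ∀ j, (∑ b, n b * V b j) * (∑ c, x c * V c j)
      = ∑ b, ∑ c, n b * x c * (V b j * V c j) := by
    intro j
    rw [Finset.sum_mul_sum]
    exact Finset.sum_congr rfl fun b _ => Finset.sum_congr rfl fun c _ => by ring
  calc ∑ j, (∑ b, n b * V b j) * (∑ c, x c * V c j)
      = ∑ j, ∑ b, ∑ c, n b * x c * (V b j * V c j) :=
        Finset.sum_congr rfl fun j _ => h1 j
    _ = ∑ b, ∑ c, n b * x c * ∑ j, V b j * V c j := by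
        rw [Finset.sum_comm]
        refine Finset.sum_congr rfl fun b _ => ?_
        rw [Finset.sum_comm]
        refine Finset.sum_congr rfl fun c _ => ?_
        rw [Finset.mul_sum]
    _ = ∑ b, n b * x b := by
        refine Finset.sum_congr rfl fun b _ => ?_
        simp_rw [hVVt]
        simp

open Matrix in
lemma sum_mul_le_nuclearNorm {α β : Type*} [Fintype α] [Fintype β] [DecidableEq β]
    (N X : Matrix α β ℝ) (hX : ∀ v : β → ℝ, (X *ᵥ v) ⬝ᵥ (X *ᵥ v) ≤ v ⬝ᵥ v) :
    ∑ a, ∑ b, N a b * X a b ≤ nuclearNorm N := by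
  obtain ⟨V, lam, hVtV, hVVt, hW, hnn⟩ := exists_spectral N
  have key : ∑ a, ∑ b, N a b * X a b
      = ∑ j, (N *ᵥ fun x => V x j) ⬝ᵥ (X *ᵥ fun x => V x j) := by
    have h1 : ∀ j, (N *ᵥ fun x => V x j) ⬝ᵥ (X *ᵥ fun x => V x j)
        = ∑ a, (∑ b, N a b * V b j) * (∑ c, X a c * V c j) := by
      intro j; simp [dotProduct, Matrix.mulVec]
    simp_rw [h1]
    symm
    rw [Finset.sum_comm]
    exact Finset.sum_congr rfl fun a _ => orth_pairing V hVVt _ _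
  rw [key, hnn]
  apply Finset.sum_le_sum
  intro j _
  have h2 : (N *ᵥ fun x => V x j) ⬝ᵥ (N *ᵥ fun x => V x j) = lam j := by
    simpa using hW j j
  have hv1 : (fun x => V x j) ⬝ᵥ (fun x => V x j) = 1 := by
    simpa [dotProduct] using hVtV j j
  have h3 : (X *ᵥ fun x => V x j) ⬝ᵥ (X *ᵥ fun x => V x j) ≤ 1 := by
    have := hX (fun x => V x j); rwa [hv1] at this
  calc (N *ᵥ fun x => V x j) ⬝ᵥ (X *ᵥ fun x => V x j)
      ≤ |(N *ᵥ fun x => V x j) ⬝ᵥ (X *ᵥ fun x => V x j)| := le_abs_self _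
    _ ≤ Real.sqrt ((N *ᵥ fun x => V x j) ⬝ᵥ (N *ᵥ fun x => V x j)) *
        Real.sqrt ((X *ᵥ fun x => V x j) ⬝ᵥ (X *ᵥ fun x => V x j)) := abs_dotProduct_le _ _
    _ ≤ Real.sqrt (lam j) * 1 := by
        rw [h2]
        refine mul_le_mul_of_nonneg_left ?_ (Real.sqrt_nonneg _)
        calc Real.sqrt ((X *ᵥ fun x => V x j) ⬝ᵥ (X *ᵥ fun x => V x j))
            ≤ Real.sqrt 1 := Real.sqrt_le_sqrt h3
          _ = 1 := Real.sqrt_one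
    _ = Real.sqrt (lam j) := mul_one _

lemma pairing_general {ι γ : Type*} [Fintype ι] [Fintype γ] [DecidableEq ι]
    (w : ι → γ → ℝ) (lam : ι → ℝ)
    (hw : ∀ i j, (∑ a, w i a * w j a) = if i = j then lam j else 0) (d e : ι → ℝ) :
    ∑ a, (∑ j, d j * w j a) * (∑ i, e i * w i a) = ∑ j, d j * e j * lam j := by
  have h1 : ∀ a, (∑ j, d j * w j a) * (∑ i, e i * w i a)
      = ∑ j, ∑ i, d j * e i * (w j a * w i a) := by
    intro a
    rw [Finset.sum_mul_sum]
    exact Finset.sum_congr rfl fun j _ => Finset.sum_congr rfl fun i _ => by ring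
  calc ∑ a, (∑ j, d j * w j a) * (∑ i, e i * w i a)
      = ∑ a, ∑ j, ∑ i, d j * e i * (w j a * w i a) :=
        Finset.sum_congr rfl fun a _ => h1 a
    _ = ∑ j, ∑ i, d j * e i * ∑ a, w j a * w i a := by
        rw [Finset.sum_comm]
        refine Finset.sum_congr rfl fun j _ => ?_
        rw [Finset.sum_comm]
        refine Finset.sum_congr rfl fun i _ => ?_
        rw [Finset.mul_sum]
    _ = ∑ j, d j * e j * lam j := by
        refine Finset.sum_congr rfl fun j _ => ?_
        simp_rw [hw]
        simp

open Matrix in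
lemma nuclearNorm_exists_dual {α β : Type*} [Fintype α] [Fintype β] [DecidableEq β]
    (M : Matrix α β ℝ) :
    ∃ X : Matrix α β ℝ,
      (∀ v : β → ℝ, (X *ᵥ v) ⬝ᵥ (X *ᵥ v) ≤ v ⬝ᵥ v) ∧
      nuclearNorm M = ∑ a, ∑ b, M a b * X a b := by
  obtain ⟨V, lam, hVtV, hVVt, hW, hnn⟩ := exists_spectral M
  set w : β → α → ℝ := fun j => M *ᵥ fun x => V x j with hwdef
  have hWsum : ∀ i j, (∑ a, w i a * w j a) = if i = j then lam j else 0 := by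
    intro i j
    simpa [dotProduct] using hW i j
  have hlam : ∀ j, 0 ≤ lam j := by
    intro j
    have h := hWsum j j
    rw [if_pos rfl] at h
    rw [← h]
    exact Finset.sum_nonneg fun a _ => mul_self_nonneg _
  set c : β → ℝ := fun j => if lam j = 0 then 0 else (Real.sqrt (lam j))⁻¹ with hcdef
  refine ⟨Matrix.of fun a b => ∑ j, c j * w j a * V b j, ?_, ?_⟩
  · intro v
    have hXv : ((Matrix.of fun a b => ∑ j, c j * w j a * V b j) *ᵥ v)
        = fun a => ∑ j, (c j * ∑ b, v b * V b j) * w j a := by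
      funext a
      simp only [Matrix.mulVec, dotProduct, Matrix.of_apply]
      rw [show (∑ b, (∑ j, c j * w j a * V b j) * v b)
          = ∑ b, ∑ j, c j * w j a * V b j * v b from
        Finset.sum_congr rfl fun b _ => Finset.sum_mul ..]
      rw [Finset.sum_comm]
      refine Finset.sum_congr rfl fun j _ => ?_
      rw [Finset.mul_sum, Finset.sum_mul]
      exact Finset.sum_congr rfl fun b _ => by ring
    rw [hXv]
    have hdot : (fun a => ∑ j, (c j * ∑ b, v b * V b j) * w j a) ⬝ᵥ
        (fun a => ∑ j, (c j * ∑ b, v b * V b j) * w j a)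
        = ∑ j, (c j * ∑ b, v b * V b j) * (c j * ∑ b, v b * V b j) * lam j :=
      pairing_general w lam hWsum _ _
    rw [hdot]
    have hle : ∀ j, (c j * ∑ b, v b * V b j) * (c j * ∑ b, v b * V b j) * lam j
        ≤ (∑ b, v b * V b j) * (∑ b, v b * V b j) := by
      intro j
      by_cases h : lam j = 0
      · simp [hcdef, h, mul_self_nonneg]
      · have hpos : 0 < lam j := lt_of_le_of_ne (hlam j) (Ne.symm h)
        have hs : Real.sqrt (lam j) ≠ 0 := by
          positivity
        have hcc : c j * c j * lam j = 1 := by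
          simp only [hcdef, if_neg h]
          have hsq := Real.mul_self_sqrt (hlam j)
          calc _ = (Real.sqrt (lam j))⁻¹ * (Real.sqrt (lam j))⁻¹ *
                (Real.sqrt (lam j) * Real.sqrt (lam j)) := by rw [hsq]
            _ = 1 := by rw [mul_mul_mul_comm, inv_mul_cancel₀ hs, one_mul]
        have heq : (c j * ∑ b, v b * V b j) * (c j * ∑ b, v b * V b j) * lam j
            = (∑ b, v b * V b j) * (∑ b, v b * V b j) := by
          calc (c j * ∑ b, v b * V b j) * (c j * ∑ b, v b * V b j) * lam j
              = (c j * c j * lam j) * ((∑ b, v b * V b j) * (∑ b, v b * V b j)) := by ring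
            _ = (∑ b, v b * V b j) * (∑ b, v b * V b j) := by rw [hcc, one_mul]
        exact le_of_eq heq
    calc ∑ j, (c j * ∑ b, v b * V b j) * (c j * ∑ b, v b * V b j) * lam j
        ≤ ∑ j, (∑ b, v b * V b j) * (∑ b, v b * V b j) :=
          Finset.sum_le_sum fun j _ => hle j
      _ = ∑ b, v b * v b := orth_pairing V hVVt v v
      _ = v ⬝ᵥ v := rfl
  · rw [hnn]
    have hwa : ∀ j a, (∑ b, M a b * V b j) = w j a := by
      intro j a
      simp [hwdef, Matrix.mulVec, dotProduct]
    have hval : ∑ a, ∑ b, M a b * (∑ j, c j * w j a * V b j)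
        = ∑ j, c j * ∑ a, w j a * w j a := by
      calc ∑ a, ∑ b, M a b * (∑ j, c j * w j a * V b j)
          = ∑ a, ∑ b, ∑ j, c j * w j a * (M a b * V b j) := by
            refine Finset.sum_congr rfl fun a _ => Finset.sum_congr rfl fun b _ => ?_
            rw [Finset.mul_sum]
            exact Finset.sum_congr rfl fun j _ => by ring
        _ = ∑ a, ∑ j, ∑ b, c j * w j a * (M a b * V b j) :=
            Finset.sum_congr rfl fun a _ => Finset.sum_comm
        _ = ∑ j, ∑ a, ∑ b, c j * w j a * (M a b * V b j) := Finset.sum_comm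
        _ = ∑ j, ∑ a, c j * w j a * (∑ b, M a b * V b j) := by
            refine Finset.sum_congr rfl fun j _ => Finset.sum_congr rfl fun a _ => ?_
            rw [Finset.mul_sum]
        _ = ∑ j, ∑ a, c j * (w j a * w j a) := by
            refine Finset.sum_congr rfl fun j _ => Finset.sum_congr rfl fun a _ => ?_
            rw [hwa j a]; ring
        _ = ∑ j, c j * ∑ a, w j a * w j a := by
            refine Finset.sum_congr rfl fun j _ => ?_
            rw [Finset.mul_sum]
    have hsqrt : ∀ j, Real.sqrt (lam j) = c j * lam j := by
      intro j
      by_cases h : lam j = 0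
      · simp [hcdef, h]
      · simp only [hcdef, if_neg h]
        have hpos : 0 < lam j := lt_of_le_of_ne (hlam j) (Ne.symm h)
        have hs : Real.sqrt (lam j) ≠ 0 := by positivity
        have hsq := Real.mul_self_sqrt (hlam j)
        calc _ = (Real.sqrt (lam j))⁻¹ * (Real.sqrt (lam j) * Real.sqrt (lam j)) := by
              rw [← mul_assoc, inv_mul_cancel₀ hs, one_mul]
          _ = _ := by rw [hsq]
    calc ∑ j, Real.sqrt (lam j) = ∑ j, c j * lam j :=
          Finset.sum_congr rfl fun j _ => hsqrt j
      _ = ∑ j, c j * ∑ a, w j a * w j a := by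
          refine Finset.sum_congr rfl fun j _ => ?_
          rw [hWsum j j, if_pos rfl]
      _ = ∑ a, ∑ b, M a b * (∑ j, c j * w j a * V b j) := hval.symm
      _ = ∑ a, ∑ b, M a b * ((Matrix.of fun a b => ∑ j, c j * w j a * V b j) a b) := rfl

open Matrix in
lemma nuclearNorm_perturb {γ δ : Type*} [Fintype γ] [Fintype δ] [DecidableEq δ]
    (Y E : Matrix γ δ ℝ) (D : ℝ)
    (hE : ∀ X : Matrix γ δ ℝ, (∀ v, (X *ᵥ v) ⬝ᵥ (X *ᵥ v) ≤ v ⬝ᵥ v) →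
      |∑ a, ∑ b, E a b * X a b| ≤ D) :
    nuclearNorm (Y + E) ≤ nuclearNorm Y + D ∧
      nuclearNorm Y ≤ nuclearNorm (Y + E) + D := by
  have hsplit : ∀ X : Matrix γ δ ℝ, ∑ a, ∑ b, (Y + E) a b * X a b
      = (∑ a, ∑ b, Y a b * X a b) + ∑ a, ∑ b, E a b * X a b := by
    intro X
    simp [Matrix.add_apply, add_mul, Finset.sum_add_distrib]
  constructor
  · obtain ⟨X, hX, hval⟩ := nuclearNorm_exists_dual (Y + E)
    have h1 := sum_mul_le_nuclearNorm Y X hX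
    have h2 := (abs_le.mp (hE X hX)).2
    rw [hval, hsplit]
    linarith
  · obtain ⟨X, hX, hval⟩ := nuclearNorm_exists_dual Y
    have h1 := sum_mul_le_nuclearNorm (Y + E) X hX
    have h2 := (abs_le.mp (hE X hX)).1
    rw [hsplit] at h1
    rw [hval]
    linarith

open Matrix in
lemma cs_bound {γ δ : Type*} [Fintype γ] [Fintype δ] (u : γ → ℝ) (v : δ → ℝ)
    (X : Matrix γ δ ℝ) (hX : ∀ z : δ → ℝ, (X *ᵥ z) ⬝ᵥ (X *ᵥ z) ≤ z ⬝ᵥ z)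
    (hu : ∑ a, u a * u a ≤ 1) (hv : ∑ b, v b * v b ≤ 1) :
    |∑ a, ∑ b, u a * v b * X a b| ≤ 1 := by
  have h1 : ∑ a, ∑ b, u a * v b * X a b = u ⬝ᵥ (X *ᵥ v) := by
    simp only [dotProduct, Matrix.mulVec, Finset.mul_sum]
    exact Finset.sum_congr rfl fun a _ => Finset.sum_congr rfl fun b _ => by ring
  rw [h1]
  have h2 := abs_dotProduct_le u (X *ᵥ v)
  have hu' : Real.sqrt (u ⬝ᵥ u) ≤ 1 := by
    rw [show (1 : ℝ) = Real.sqrt 1 from Real.sqrt_one.symm]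
    exact Real.sqrt_le_sqrt (by simpa [dotProduct] using hu)
  have hv' : Real.sqrt ((X *ᵥ v) ⬝ᵥ (X *ᵥ v)) ≤ 1 := by
    rw [show (1 : ℝ) = Real.sqrt 1 from Real.sqrt_one.symm]
    refine Real.sqrt_le_sqrt ?_
    refine le_trans (hX v) (by simpa [dotProduct] using hv)
  calc |u ⬝ᵥ (X *ᵥ v)| ≤ Real.sqrt (u ⬝ᵥ u) * Real.sqrt ((X *ᵥ v) ⬝ᵥ (X *ᵥ v)) := h2
    _ ≤ 1 * 1 := mul_le_mul hu' hv' (Real.sqrt_nonneg _) zero_le_one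
    _ = 1 := mul_one 1

open Matrix in
lemma unfold_pair_bound {γ δ : Type*} [Fintype γ] [Fintype δ] {k : ℕ}
    (u : Fin k → Fin k → γ → ℝ) (vv : Fin k → Fin k → δ → ℝ)
    (Δ : Matrix (Fin k) (Fin k) ℝ)
    (hu : ∀ h g, (∑ a, u h g a * u h g a) ≤ 1)
    (hv : ∀ h g, (∑ b, vv h g b * vv h g b) ≤ 1)
    (X : Matrix γ δ ℝ) (hX : ∀ v : δ → ℝ, (X *ᵥ v) ⬝ᵥ (X *ᵥ v) ≤ v ⬝ᵥ v) :
    |∑ a, ∑ b, (∑ h, ∑ g, Δ h g * u h g a * vv h g b) * X a b| ≤ ∑ h, ∑ g, |Δ h g| := by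
  have hre : ∑ a, ∑ b, (∑ h, ∑ g, Δ h g * u h g a * vv h g b) * X a b
      = ∑ h, ∑ g, Δ h g * ∑ a, ∑ b, u h g a * vv h g b * X a b := by
    calc ∑ a, ∑ b, (∑ h, ∑ g, Δ h g * u h g a * vv h g b) * X a b
        = ∑ p : γ × δ, (∑ h, ∑ g, Δ h g * u h g p.1 * vv h g p.2) * X p.1 p.2 :=
          (Fintype.sum_prod_type'
            (f := fun a b => (∑ h, ∑ g, Δ h g * u h g a * vv h g b) * X a b)).symm
      _ = ∑ p : γ × δ, (∑ q : Fin k × Fin k, Δ q.1 q.2 * u q.1 q.2 p.1 * vv q.1 q.2 p.2) *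
            X p.1 p.2 := by
          refine Finset.sum_congr rfl fun p _ => ?_
          congr 1
          exact (Fintype.sum_prod_type'
            (f := fun h g => Δ h g * u h g p.1 * vv h g p.2)).symm
      _ = ∑ q : Fin k × Fin k, ∑ p : γ × δ,
            Δ q.1 q.2 * u q.1 q.2 p.1 * vv q.1 q.2 p.2 * X p.1 p.2 := by
          simp_rw [Finset.sum_mul]
          exact Finset.sum_comm
      _ = ∑ q : Fin k × Fin k, Δ q.1 q.2 *
            ∑ p : γ × δ, u q.1 q.2 p.1 * vv q.1 q.2 p.2 * X p.1 p.2 := by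
          refine Finset.sum_congr rfl fun q _ => ?_
          rw [Finset.mul_sum]
          exact Finset.sum_congr rfl fun p _ => by ring
      _ = ∑ h, ∑ g, Δ h g * ∑ p : γ × δ, u h g p.1 * vv h g p.2 * X p.1 p.2 :=
          Fintype.sum_prod_type'
            (f := fun h g => Δ h g * ∑ p : γ × δ, u h g p.1 * vv h g p.2 * X p.1 p.2)
      _ = ∑ h, ∑ g, Δ h g * ∑ a, ∑ b, u h g a * vv h g b * X a b := by
          refine Finset.sum_congr rfl fun h _ => Finset.sum_congr rfl fun g _ => ?_
          congr 1
          exact Fintype.sum_prod_type' (f := fun a b => u h g a * vv h g b * X a b)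
  rw [hre]
  calc |∑ h, ∑ g, Δ h g * ∑ a, ∑ b, u h g a * vv h g b * X a b|
      ≤ ∑ h, |∑ g, Δ h g * ∑ a, ∑ b, u h g a * vv h g b * X a b| :=
        Finset.abs_sum_le_sum_abs _ _
    _ ≤ ∑ h, ∑ g, |Δ h g * ∑ a, ∑ b, u h g a * vv h g b * X a b| :=
        Finset.sum_le_sum fun h _ => Finset.abs_sum_le_sum_abs _ _
    _ ≤ ∑ h, ∑ g, |Δ h g| := by
        refine Finset.sum_le_sum fun h _ => Finset.sum_le_sum fun g _ => ?_
        rw [abs_mul]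
        calc |Δ h g| * |∑ a, ∑ b, u h g a * vv h g b * X a b|
            ≤ |Δ h g| * 1 :=
              mul_le_mul_of_nonneg_left (cs_bound (u h g) (vv h g) X hX (hu h g) (hv h g))
                (abs_nonneg _)
          _ = |Δ h g| := mul_one _


lemma col_sq_le_one {n k : ℕ} (P : Matrix (Fin n) (Fin k) ℝ) (hP : colStochastic P)
    (h : Fin k) : ∑ x, P x h * P x h ≤ 1 := by
  have h1 := Finset.sum_sq_le_sq_sum_of_nonneg (s := Finset.univ)
    (f := fun x => P x h) (fun i _ => hP.1 i h)
  rw [hP.2 h] at h1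
  simpa [sq] using h1

lemma prod_col_sq_le_one {n k : ℕ} (P Q : Matrix (Fin n) (Fin k) ℝ)
    (hP : colStochastic P) (hQ : colStochastic Q) (h g : Fin k) :
    ∑ r : Fin n × Fin n, (P r.1 h * Q r.2 g) * (P r.1 h * Q r.2 g) ≤ 1 := by
  have heq : ∑ r : Fin n × Fin n, (P r.1 h * Q r.2 g) * (P r.1 h * Q r.2 g)
      = (∑ x, P x h * P x h) * (∑ y, Q y g * Q y g) := by
    rw [Fintype.sum_prod_type' (f := fun x y => (P x h * Q y g) * (P x h * Q y g)),
      Finset.sum_mul_sum]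
    exact Finset.sum_congr rfl fun x _ => Finset.sum_congr rfl fun y _ => by ring
  rw [heq]
  exact mul_le_one₀ (col_sq_le_one P hP h)
    (Finset.sum_nonneg fun y _ => mul_self_nonneg _) (col_sq_le_one Q hQ g)


open Matrix

set_option maxHeartbeats 1600000 in
/-- Lemma 2 (recovery condition): if `‖Δ‖_F ≤ θ/(k²+k)` where `θ` is the excessive dependence,
then the nuclear norm quartet test returns the correct quartet relation. -/
theorem quartet_recovery_condition (n k : ℕ) (hn : 0 < n) (hk : 0 < k)
    (P1 P2 P3 P4 : Matrix (Fin n) (Fin k) ℝ)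
    (h1 : colStochastic P1) (h2 : colStochastic P2)
    (h3 : colStochastic P3) (h4 : colStochastic P4)
    (p q : Fin k → ℝ) (Δ : Matrix (Fin k) (Fin k) ℝ)
    (θ : ℝ)
    (hθ : θ = min
      (nuclearNorm (unfoldB P1 P2 P3 P4 (Matrix.vecMulVec p q)) -
        nuclearNorm (unfoldA P1 P2 P3 P4 (Matrix.vecMulVec p q)))
      (nuclearNorm (unfoldC P1 P2 P3 P4 (Matrix.vecMulVec p q)) -
        nuclearNorm (unfoldA P1 P2 P3 P4 (Matrix.vecMulVec p q))))
    (hΔ : frobeniusNorm Δ ≤ θ / ((k : ℝ) ^ 2 + k)) :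
    nuclearNorm (unfoldA P1 P2 P3 P4 (Matrix.vecMulVec p q + Δ)) ≤
      nuclearNorm (unfoldB P1 P2 P3 P4 (Matrix.vecMulVec p q + Δ)) ∧
    nuclearNorm (unfoldA P1 P2 P3 P4 (Matrix.vecMulVec p q + Δ)) ≤
      nuclearNorm (unfoldC P1 P2 P3 P4 (Matrix.vecMulVec p q + Δ)) := by
  classical
  set N0 : Matrix (Fin k) (Fin k) ℝ := Matrix.vecMulVec p q with hN0
  set D : ℝ := ∑ h, ∑ g, |Δ h g| with hD
  -- linearity of the unfoldings
  have hlinA : unfoldA P1 P2 P3 P4 (N0 + Δ)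
      = unfoldA P1 P2 P3 P4 N0 + unfoldA P1 P2 P3 P4 Δ := by
    ext r c
    simp [unfoldA, Matrix.add_apply, mul_add, add_mul, Finset.sum_add_distrib]
  have hlinB : unfoldB P1 P2 P3 P4 (N0 + Δ)
      = unfoldB P1 P2 P3 P4 N0 + unfoldB P1 P2 P3 P4 Δ := by
    ext r c
    simp [unfoldB, Matrix.add_apply, mul_add, add_mul, Finset.sum_add_distrib]
  have hlinC : unfoldC P1 P2 P3 P4 (N0 + Δ)
      = unfoldC P1 P2 P3 P4 N0 + unfoldC P1 P2 P3 P4 Δ := by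
    ext r c
    simp [unfoldC, Matrix.add_apply, mul_add, add_mul, Finset.sum_add_distrib]
  -- pairing bounds for the perturbation parts
  have hboundA : ∀ X : Matrix (Fin n × Fin n) (Fin n × Fin n) ℝ,
      (∀ v, (X *ᵥ v) ⬝ᵥ (X *ᵥ v) ≤ v ⬝ᵥ v) →
      |∑ a, ∑ b, (unfoldA P1 P2 P3 P4 Δ) a b * X a b| ≤ D := by
    intro X hX
    have hform : ∑ a, ∑ b, (unfoldA P1 P2 P3 P4 Δ) a b * X a b
        = ∑ a, ∑ b, (∑ h, ∑ g,
            Δ h g * (P1 a.1 h * P2 a.2 h) * (P3 b.1 g * P4 b.2 g)) * X a b := by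
      refine Finset.sum_congr rfl fun a _ => Finset.sum_congr rfl fun b _ => ?_
      congr 1
      simp only [unfoldA, Matrix.of_apply]
      exact Finset.sum_congr rfl fun h _ => Finset.sum_congr rfl fun g _ => by ring
    have H := unfold_pair_bound (fun h _ r => P1 r.1 h * P2 r.2 h)
      (fun _ g c => P3 c.1 g * P4 c.2 g) Δ
      (fun h g => prod_col_sq_le_one P1 P2 h1 h2 h h)
      (fun h g => prod_col_sq_le_one P3 P4 h3 h4 g g) X hX
    rw [hform]
    convert H using 0
  have hboundB : ∀ X : Matrix (Fin n × Fin n) (Fin n × Fin n) ℝ,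
      (∀ v, (X *ᵥ v) ⬝ᵥ (X *ᵥ v) ≤ v ⬝ᵥ v) →
      |∑ a, ∑ b, (unfoldB P1 P2 P3 P4 Δ) a b * X a b| ≤ D := by
    intro X hX
    have hform : ∑ a, ∑ b, (unfoldB P1 P2 P3 P4 Δ) a b * X a b
        = ∑ a, ∑ b, (∑ h, ∑ g,
            Δ h g * (P1 a.1 h * P3 a.2 g) * (P2 b.1 h * P4 b.2 g)) * X a b := by
      refine Finset.sum_congr rfl fun a _ => Finset.sum_congr rfl fun b _ => ?_
      congr 1
      simp only [unfoldB, Matrix.of_apply]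
      exact Finset.sum_congr rfl fun h _ => Finset.sum_congr rfl fun g _ => by ring
    have H := unfold_pair_bound (fun h g r => P1 r.1 h * P3 r.2 g)
      (fun h g c => P2 c.1 h * P4 c.2 g) Δ
      (fun h g => prod_col_sq_le_one P1 P3 h1 h3 h g)
      (fun h g => prod_col_sq_le_one P2 P4 h2 h4 h g) X hX
    rw [hform]
    convert H using 0
  have hboundC : ∀ X : Matrix (Fin n × Fin n) (Fin n × Fin n) ℝ,
      (∀ v, (X *ᵥ v) ⬝ᵥ (X *ᵥ v) ≤ v ⬝ᵥ v) →
      |∑ a, ∑ b, (unfoldC P1 P2 P3 P4 Δ) a b * X a b| ≤ D := by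
    intro X hX
    have hform : ∑ a, ∑ b, (unfoldC P1 P2 P3 P4 Δ) a b * X a b
        = ∑ a, ∑ b, (∑ h, ∑ g,
            Δ h g * (P1 a.1 h * P4 a.2 g) * (P2 b.1 h * P3 b.2 g)) * X a b := by
      refine Finset.sum_congr rfl fun a _ => Finset.sum_congr rfl fun b _ => ?_
      congr 1
      simp only [unfoldC, Matrix.of_apply]
      exact Finset.sum_congr rfl fun h _ => Finset.sum_congr rfl fun g _ => by ring
    have H := unfold_pair_bound (fun h g r => P1 r.1 h * P4 r.2 g)
      (fun h g c => P2 c.1 h * P3 c.2 g) Δ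
      (fun h g => prod_col_sq_le_one P1 P4 h1 h4 h g)
      (fun h g => prod_col_sq_le_one P2 P3 h2 h3 h g) X hX
    rw [hform]
    convert H using 0
  have pA := nuclearNorm_perturb (unfoldA P1 P2 P3 P4 N0) (unfoldA P1 P2 P3 P4 Δ) D hboundA
  have pB := nuclearNorm_perturb (unfoldB P1 P2 P3 P4 N0) (unfoldB P1 P2 P3 P4 Δ) D hboundB
  have pC := nuclearNorm_perturb (unfoldC P1 P2 P3 P4 N0) (unfoldC P1 P2 P3 P4 Δ) D hboundC
  rw [← hlinA] at pA
  rw [← hlinB] at pB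
  rw [← hlinC] at pC
  -- bound D by k * frobeniusNorm Δ
  have hD0 : 0 ≤ D :=
    Finset.sum_nonneg fun h _ => Finset.sum_nonneg fun g _ => abs_nonneg _
  have hfro0 : 0 ≤ frobeniusNorm Δ := Real.sqrt_nonneg _
  have hDfro : D ≤ (k : ℝ) * frobeniusNorm Δ := by
    have hcs := Finset.sum_mul_sq_le_sq_mul_sq Finset.univ
      (fun q : Fin k × Fin k => |Δ q.1 q.2|) (fun _ => (1 : ℝ))
    have hDq : D = ∑ q : Fin k × Fin k, |Δ q.1 q.2| * 1 := by
      rw [hD]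
      rw [show (∑ q : Fin k × Fin k, |Δ q.1 q.2| * 1) = ∑ q : Fin k × Fin k, |Δ q.1 q.2| by
        simp]
      exact (Fintype.sum_prod_type' (f := fun h g => |Δ h g|)).symm
    have hsq : ∑ q : Fin k × Fin k, |Δ q.1 q.2| ^ 2 = ∑ i, ∑ j, Δ i j ^ 2 := by
      rw [show (∑ q : Fin k × Fin k, |Δ q.1 q.2| ^ 2)
          = ∑ i, ∑ j, |Δ i j| ^ 2 from Fintype.sum_prod_type' (f := fun i j => |Δ i j| ^ 2)]
      simp [sq_abs]
    have hcard : ∑ _q : Fin k × Fin k, ((1 : ℝ)) ^ 2 = (k : ℝ) * k := by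
      simp [Finset.card_univ, Fintype.card_prod]
    have hD2 : D ^ 2 ≤ ((k : ℝ) * k) * ∑ i, ∑ j, Δ i j ^ 2 := by
      rw [hDq]
      calc (∑ q : Fin k × Fin k, |Δ q.1 q.2| * 1) ^ 2
          ≤ (∑ q : Fin k × Fin k, |Δ q.1 q.2| ^ 2) * ∑ _q : Fin k × Fin k, (1 : ℝ) ^ 2 := hcs
        _ = ((k : ℝ) * k) * ∑ i, ∑ j, Δ i j ^ 2 := by rw [hsq, hcard]; ring
    have hknn : (0 : ℝ) ≤ (k : ℝ) := Nat.cast_nonneg k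
    calc D = Real.sqrt (D ^ 2) := (Real.sqrt_sq hD0).symm
      _ ≤ Real.sqrt (((k : ℝ) * k) * ∑ i, ∑ j, Δ i j ^ 2) := Real.sqrt_le_sqrt hD2
      _ = Real.sqrt ((k : ℝ) * k) * Real.sqrt (∑ i, ∑ j, Δ i j ^ 2) :=
          Real.sqrt_mul (by positivity) _
      _ = (k : ℝ) * frobeniusNorm Δ := by
          rw [Real.sqrt_mul_self hknn]
          rfl
  have hk1 : (1 : ℝ) ≤ (k : ℝ) := by exact_mod_cast hk
  have hkpos : (0 : ℝ) < (k : ℝ) ^ 2 + k := by positivity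
  have hfroθ : ((k : ℝ) ^ 2 + k) * frobeniusNorm Δ ≤ θ := by
    have := (le_div_iff₀ hkpos).mp hΔ
    linarith
  have h2D : 2 * D ≤ θ := by nlinarith
  have hθB : θ ≤ nuclearNorm (unfoldB P1 P2 P3 P4 N0) - nuclearNorm (unfoldA P1 P2 P3 P4 N0) :=
    hθ ▸ min_le_left _ _
  have hθC : θ ≤ nuclearNorm (unfoldC P1 P2 P3 P4 N0) - nuclearNorm (unfoldA P1 P2 P3 P4 N0) :=
    hθ ▸ min_le_right _ _
  constructor
  · linarith [pA.1, pB.2]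
  · linarith [pA.1, pC.2]
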